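/- Let A ⊆ ℝ be a measurable set and f₁, f₂ : A → [0,∞) be integrable. Then for n ≥ 1 and s ∈ (0,1), ∫_A ((1−s)f₁(x)^{1/n} + s f₂(x)^{1/n})^n dx ≤ ((1−s)(∫_A f₁)^{1/n} + s(∫_A f₂)^{1/n})^n. -/

import Mathlib

open Real MeasureTheory

open scoped ENNReal

private lemma aemeas_rpow {α : Type*} [MeasurableSpace α] {μ : Measure α} {g : α → ℝ≥0∞}
    (hg : AEMeasurable g μ) (c : ℝ) : AEMeasurable (fun x => g x ^ c) μ :=
  (ENNReal.continuous_rpow_const.measurable).comp_aemeasurable hg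

/-- Hölder step: mixed-power integral bound. -/
private lemma holder_step {α : Type*} [MeasurableSpace α] (μ : Measure α) {g₁ g₂ : α → ℝ≥0∞}
    (h₁ : AEMeasurable g₁ μ) (h₂ : AEMeasurable g₂ μ) {n k : ℕ} (hn : 1 ≤ n) (hk : k ≤ n) :
    ∫⁻ x, g₁ x ^ ((k : ℝ) / n) * g₂ x ^ (((n : ℝ) - k) / n) ∂μ ≤
      (∫⁻ x, g₁ x ∂μ) ^ ((k : ℝ) / n) * (∫⁻ x, g₂ x ∂μ) ^ (((n : ℝ) - k) / n) := by
  have hn0 : (n : ℝ) ≠ 0 := by positivity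
  rcases Nat.eq_zero_or_pos k with hk0 | hkpos
  · subst hk0
    simp [ENNReal.rpow_zero, div_self hn0, ENNReal.rpow_one]
  rcases eq_or_lt_of_le hk with hkn | hkn
  · subst hkn
    simp [ENNReal.rpow_zero, div_self hn0, ENNReal.rpow_one]
  · -- 0 < k < n
    have hkR : (0 : ℝ) < k := by exact_mod_cast hkpos
    have hknR : (k : ℝ) < n := by exact_mod_cast hkn
    set p : ℝ := (n : ℝ) / k with hp
    set q : ℝ := (n : ℝ) / ((n : ℝ) - k) with hq
    have hnk : (0 : ℝ) < (n : ℝ) - k := by linarith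
    have hpq : p.HolderConjugate q := by
      rw [Real.holderConjugate_iff]
      constructor
      · rw [hp]; rw [lt_div_iff₀ hkR]; linarith
      · rw [hp, hq]
        field_simp
        ring
    have key := ENNReal.lintegral_mul_le_Lp_mul_Lq μ hpq
      (f := fun x => g₁ x ^ ((k : ℝ) / n)) (g := fun x => g₂ x ^ (((n : ℝ) - k) / n))
      (aemeas_rpow h₁ _) (aemeas_rpow h₂ _)
    have e₁ : ∀ x : ℝ≥0∞, (x ^ ((k : ℝ) / n)) ^ p = x := by
      intro x
      rw [← ENNReal.rpow_mul, hp]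
      rw [show (k : ℝ) / n * ((n : ℝ) / k) = 1 by field_simp, ENNReal.rpow_one]
    have e₂ : ∀ x : ℝ≥0∞, (x ^ (((n : ℝ) - k) / n)) ^ q = x := by
      intro x
      rw [← ENNReal.rpow_mul, hq]
      rw [show ((n : ℝ) - k) / n * ((n : ℝ) / ((n : ℝ) - k)) = 1 by field_simp, ENNReal.rpow_one]
    have hp1 : 1 / p = (k : ℝ) / n := by rw [hp]; field_simp
    have hq1 : 1 / q = ((n : ℝ) - k) / n := by rw [hq]; field_simp
    simpa only [Pi.mul_apply, e₁, e₂, hp1, hq1] using key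

/-- Hölder-type integral inequality for the `1/n`-mean. -/
theorem integral_mean_le (n : ℕ) (hn : 1 ≤ n) (s : ℝ) (hs : 0 < s) (hs1 : s < 1)
    (A : Set ℝ) (hA : MeasurableSet A) (f₁ f₂ : ℝ → ℝ)
    (hf₁0 : ∀ x ∈ A, 0 ≤ f₁ x) (hf₂0 : ∀ x ∈ A, 0 ≤ f₂ x)
    (hf₁ : IntegrableOn f₁ A) (hf₂ : IntegrableOn f₂ A)
    (hmean : IntegrableOn (fun x => ((1 - s) * f₁ x ^ (1 / (n : ℝ)) + s * f₂ x ^ (1 / (n : ℝ))) ^ (n : ℕ)) A) :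
    ∫ x in A, ((1 - s) * f₁ x ^ (1 / (n : ℝ)) + s * f₂ x ^ (1 / (n : ℝ))) ^ (n : ℕ) ≤
      ((1 - s) * (∫ x in A, f₁ x) ^ (1 / (n : ℝ)) + s * (∫ x in A, f₂ x) ^ (1 / (n : ℝ))) ^ (n : ℕ) := by
  set μ := (volume : Measure ℝ).restrict A with hμ
  have hs0 : (0 : ℝ) ≤ 1 - s := by linarith
  -- a.e. nonnegativity on A
  have hae₁ : 0 ≤ᵐ[μ] f₁ := (ae_restrict_mem hA).mono fun x hx => hf₁0 x hx
  have hae₂ : 0 ≤ᵐ[μ] f₂ := (ae_restrict_mem hA).mono fun x hx => hf₂0 x hx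
  set g₁ : ℝ → ℝ≥0∞ := fun x => ENNReal.ofReal (f₁ x) with hg₁
  set g₂ : ℝ → ℝ≥0∞ := fun x => ENNReal.ofReal (f₂ x) with hg₂
  have hm₁ : AEMeasurable g₁ μ :=
    ENNReal.measurable_ofReal.comp_aemeasurable hf₁.aestronglyMeasurable.aemeasurable
  have hm₂ : AEMeasurable g₂ μ :=
    ENNReal.measurable_ofReal.comp_aemeasurable hf₂.aestronglyMeasurable.aemeasurable
  set I₁ : ℝ≥0∞ := ∫⁻ x, g₁ x ∂μ with hI₁d
  set I₂ : ℝ≥0∞ := ∫⁻ x, g₂ x ∂μ with hI₂d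
  have hI₁top : I₁ ≠ ⊤ := hf₁.lintegral_lt_top.ne
  have hI₂top : I₂ ≠ ⊤ := hf₂.lintegral_lt_top.ne
  have hint₁ : ∫ x in A, f₁ x = I₁.toReal :=
    integral_eq_lintegral_of_nonneg_ae hae₁ hf₁.aestronglyMeasurable
  have hint₂ : ∫ x in A, f₂ x = I₂.toReal :=
    integral_eq_lintegral_of_nonneg_ae hae₂ hf₂.aestronglyMeasurable
  set a : ℝ≥0∞ := ENNReal.ofReal (1 - s) with ha
  set b : ℝ≥0∞ := ENNReal.ofReal s with hb
  -- LHS integrand a.e. nonneg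
  have haeF : 0 ≤ᵐ[μ] fun x => ((1 - s) * f₁ x ^ (1 / (n : ℝ)) + s * f₂ x ^ (1 / (n : ℝ))) ^ (n : ℕ) := by
    filter_upwards [hae₁, hae₂] with x h1 h2
    have : 0 ≤ (1 - s) * f₁ x ^ (1 / (n : ℝ)) + s * f₂ x ^ (1 / (n : ℝ)) := by
      have := Real.rpow_nonneg h1 (1 / (n : ℝ))
      have := Real.rpow_nonneg h2 (1 / (n : ℝ))
      positivity
    positivity
  have hLHS : ∫ x in A, ((1 - s) * f₁ x ^ (1 / (n : ℝ)) + s * f₂ x ^ (1 / (n : ℝ))) ^ (n : ℕ)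
      = (∫⁻ x, ENNReal.ofReal (((1 - s) * f₁ x ^ (1 / (n : ℝ)) + s * f₂ x ^ (1 / (n : ℝ))) ^ (n : ℕ)) ∂μ).toReal :=
    integral_eq_lintegral_of_nonneg_ae haeF hmean.aestronglyMeasurable
  -- pointwise identity of ofReal of integrand
  have haeEq : (fun x => ENNReal.ofReal (((1 - s) * f₁ x ^ (1 / (n : ℝ)) + s * f₂ x ^ (1 / (n : ℝ))) ^ (n : ℕ)))
      =ᵐ[μ] fun x => (a * g₁ x ^ (1 / (n : ℝ)) + b * g₂ x ^ (1 / (n : ℝ))) ^ (n : ℕ) := by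
    filter_upwards [hae₁, hae₂] with x h1 h2
    have hr1 : (0 : ℝ) ≤ f₁ x ^ (1 / (n : ℝ)) := Real.rpow_nonneg h1 _
    have hr2 : (0 : ℝ) ≤ f₂ x ^ (1 / (n : ℝ)) := Real.rpow_nonneg h2 _
    rw [ENNReal.ofReal_pow (by positivity), ENNReal.ofReal_add (by positivity) (by positivity),
      ENNReal.ofReal_mul hs0, ENNReal.ofReal_mul hs.le,
      ENNReal.ofReal_rpow_of_nonneg h1 (by positivity),
      ENNReal.ofReal_rpow_of_nonneg h2 (by positivity)]
  have hn0 : (n : ℝ) ≠ 0 := by positivity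
  -- rewrite powers of rpow
  have hpow : ∀ (g : ℝ → ℝ≥0∞) (x : ℝ) (k : ℕ), (g x ^ (1 / (n : ℝ))) ^ k = g x ^ ((k : ℝ) / n) := by
    intro g x k
    rw [← ENNReal.rpow_natCast (g x ^ (1 / (n : ℝ))) k, ← ENNReal.rpow_mul]
    congr 1
    field_simp
  -- expand the ENNReal integrand via binomial
  have hexp : ∀ x : ℝ, (a * g₁ x ^ (1 / (n : ℝ)) + b * g₂ x ^ (1 / (n : ℝ))) ^ (n : ℕ)
      = ∑ k ∈ Finset.range (n + 1),
          (a ^ k * b ^ (n - k) * (n.choose k : ℝ≥0∞)) * (g₁ x ^ ((k : ℝ) / n) * g₂ x ^ (((n : ℝ) - k) / n)) := by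
    intro x
    rw [add_pow]
    refine Finset.sum_congr rfl fun k hk => ?_
    have hk' : k ≤ n := Nat.lt_succ_iff.mp (Finset.mem_range.mp hk)
    rw [mul_pow, mul_pow, hpow g₁ x k, hpow g₂ x (n - k)]
    have : ((n - k : ℕ) : ℝ) = (n : ℝ) - k := by
      rw [Nat.cast_sub hk']
    rw [this]
    ring
  -- bound the lintegral
  have hconst_ne_top : ∀ k : ℕ, (a ^ k * b ^ (n - k) * (n.choose k : ℝ≥0∞)) ≠ ⊤ := by
    intro k
    exact ENNReal.mul_ne_top (ENNReal.mul_ne_top (ENNReal.pow_ne_top ENNReal.ofReal_ne_top)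
      (ENNReal.pow_ne_top ENNReal.ofReal_ne_top)) (ENNReal.natCast_ne_top _)
  have hbound : ∫⁻ x, (a * g₁ x ^ (1 / (n : ℝ)) + b * g₂ x ^ (1 / (n : ℝ))) ^ (n : ℕ) ∂μ ≤
      (a * I₁ ^ (1 / (n : ℝ)) + b * I₂ ^ (1 / (n : ℝ))) ^ (n : ℕ) := by
    calc ∫⁻ x, (a * g₁ x ^ (1 / (n : ℝ)) + b * g₂ x ^ (1 / (n : ℝ))) ^ (n : ℕ) ∂μ
        = ∑ k ∈ Finset.range (n + 1),
            ∫⁻ x, (a ^ k * b ^ (n - k) * (n.choose k : ℝ≥0∞)) *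
              (g₁ x ^ ((k : ℝ) / n) * g₂ x ^ (((n : ℝ) - k) / n)) ∂μ := by
          rw [show (fun x => (a * g₁ x ^ (1 / (n : ℝ)) + b * g₂ x ^ (1 / (n : ℝ))) ^ (n : ℕ))
              = fun x => ∑ k ∈ Finset.range (n + 1),
                (a ^ k * b ^ (n - k) * (n.choose k : ℝ≥0∞)) *
                  (g₁ x ^ ((k : ℝ) / n) * g₂ x ^ (((n : ℝ) - k) / n)) from funext hexp]
          exact lintegral_finset_sum' _ fun k _ =>
            (((aemeas_rpow hm₁ _).mul (aemeas_rpow hm₂ _)).const_mul _)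
      _ = ∑ k ∈ Finset.range (n + 1),
            (a ^ k * b ^ (n - k) * (n.choose k : ℝ≥0∞)) *
              ∫⁻ x, g₁ x ^ ((k : ℝ) / n) * g₂ x ^ (((n : ℝ) - k) / n) ∂μ := by
          refine Finset.sum_congr rfl fun k _ => ?_
          exact lintegral_const_mul' _ _ (hconst_ne_top k)
      _ ≤ ∑ k ∈ Finset.range (n + 1),
            (a ^ k * b ^ (n - k) * (n.choose k : ℝ≥0∞)) *
              (I₁ ^ ((k : ℝ) / n) * I₂ ^ (((n : ℝ) - k) / n)) := by
          refine Finset.sum_le_sum fun k hk => ?_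
          exact mul_le_mul_right (holder_step μ hm₁ hm₂ hn (Nat.lt_succ_iff.mp (Finset.mem_range.mp hk))) _
      _ = (a * I₁ ^ (1 / (n : ℝ)) + b * I₂ ^ (1 / (n : ℝ))) ^ (n : ℕ) := by
          rw [add_pow]
          refine Finset.sum_congr rfl fun k hk => ?_
          have hk' : k ≤ n := Nat.lt_succ_iff.mp (Finset.mem_range.mp hk)
          rw [mul_pow, mul_pow]
          rw [show (I₁ ^ (1 / (n : ℝ))) ^ k = I₁ ^ ((k : ℝ) / n) by
            rw [← ENNReal.rpow_natCast (I₁ ^ (1 / (n : ℝ))) k, ← ENNReal.rpow_mul]; congr 1; field_simp]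
          rw [show (I₂ ^ (1 / (n : ℝ))) ^ (n - k) = I₂ ^ (((n : ℝ) - k) / n) by
            rw [← ENNReal.rpow_natCast (I₂ ^ (1 / (n : ℝ))) (n - k), ← ENNReal.rpow_mul]
            congr 1
            rw [Nat.cast_sub hk']
            field_simp]
          ring
  -- identify the RHS
  have hRHS : (a * I₁ ^ (1 / (n : ℝ)) + b * I₂ ^ (1 / (n : ℝ))) ^ (n : ℕ)
      = ENNReal.ofReal (((1 - s) * (∫ x in A, f₁ x) ^ (1 / (n : ℝ)) + s * (∫ x in A, f₂ x) ^ (1 / (n : ℝ))) ^ (n : ℕ)) := by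
    have hr1 : (0 : ℝ) ≤ (∫ x in A, f₁ x) ^ (1 / (n : ℝ)) := by
      rw [hint₁]; exact Real.rpow_nonneg ENNReal.toReal_nonneg _
    have hr2 : (0 : ℝ) ≤ (∫ x in A, f₂ x) ^ (1 / (n : ℝ)) := by
      rw [hint₂]; exact Real.rpow_nonneg ENNReal.toReal_nonneg _
    rw [ENNReal.ofReal_pow (by positivity), ENNReal.ofReal_add (by positivity) (by positivity),
      ENNReal.ofReal_mul hs0, ENNReal.ofReal_mul hs.le, hint₁, hint₂,
      ← ENNReal.ofReal_rpow_of_nonneg (x := I₁.toReal) ENNReal.toReal_nonneg (by positivity),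
      ← ENNReal.ofReal_rpow_of_nonneg (x := I₂.toReal) ENNReal.toReal_nonneg (by positivity),
      ENNReal.ofReal_toReal hI₁top, ENNReal.ofReal_toReal hI₂top]
  -- conclude
  rw [hLHS, lintegral_congr_ae haeEq]
  have hfin : ENNReal.ofReal (((1 - s) * (∫ x in A, f₁ x) ^ (1 / (n : ℝ)) + s * (∫ x in A, f₂ x) ^ (1 / (n : ℝ))) ^ (n : ℕ)) ≠ ⊤ :=
    ENNReal.ofReal_ne_top
  have hle := hbound.trans_eq hRHS
  have := ENNReal.toReal_mono hfin hle
  rwa [ENNReal.toReal_ofReal (by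
    have hr1 : (0 : ℝ) ≤ (∫ x in A, f₁ x) ^ (1 / (n : ℝ)) := by
      rw [hint₁]; exact Real.rpow_nonneg ENNReal.toReal_nonneg _
    have hr2 : (0 : ℝ) ≤ (∫ x in A, f₂ x) ^ (1 / (n : ℝ)) := by
      rw [hint₂]; exact Real.rpow_nonneg ENNReal.toReal_nonneg _
    positivity)] at this
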